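/- Let A, B be J*-algebras and h : A → B satisfy ‖h(x + y) − h(x) − h(y)‖ ≤ φ(x,y,0) for all x, y, where ∑_{n} 2^{-n} φ(2^n x, 2^n y, 0) < ∞, and additionally ‖h(2^{3n} z z* z) − h(2^n z) h(2^n z)* h(2^n z)‖ ≤ φ(0, 0, 2^n z) for all z ∈ A and n ∈ ℕ, with 2^{-n} φ(0,0,2^n z) → 0. If T(x) := lim_{n→∞} 2^{-n} h(2^n x) exists for all x, then T(z z* z) = T(z) T(z)* T(z) for all z ∈ A. -/

import Mathlib

open Filter Topology

/-- The Jordan triple cube `x ↦ x x* x` inside a subspace closed under it. -/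
def jcube {𝓐 : Type*} [NormedRing 𝓐] [StarRing 𝓐] [NormedAlgebra ℂ 𝓐]
    (S : Submodule ℂ 𝓐) (hS : ∀ a ∈ S, a * star a * a ∈ S) (x : S) : S :=
  ⟨(x : 𝓐) * star (x : 𝓐) * (x : 𝓐), hS x x.2⟩

/-- The limit map `T` preserves the Jordan triple cube. -/
theorem limit_preserves_cube {𝓐 𝓑 : Type*}
    [NormedRing 𝓐] [StarRing 𝓐] [CStarRing 𝓐] [NormedAlgebra ℂ 𝓐] [StarModule ℂ 𝓐]
    [CompleteSpace 𝓐]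
    [NormedRing 𝓑] [StarRing 𝓑] [CStarRing 𝓑] [NormedAlgebra ℂ 𝓑] [StarModule ℂ 𝓑]
    [CompleteSpace 𝓑]
    (A : Submodule ℂ 𝓐) (hA : IsClosed (A : Set 𝓐)) (hAc : ∀ a ∈ A, a * star a * a ∈ A)
    (B : Submodule ℂ 𝓑) (hB : IsClosed (B : Set 𝓑)) (hBc : ∀ b ∈ B, b * star b * b ∈ B)
    (h : A → B) (φ : A → A → A → ℝ) (hφ : ∀ x y z, 0 ≤ φ x y z)
    (hadd : ∀ x y : A, ‖(h (x + y) : 𝓑) - (h x : 𝓑) - (h y : 𝓑)‖ ≤ φ x y 0)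
    (hsum : ∀ x y : A,
      Summable fun n : ℕ => φ ((2:ℂ)^n • x) ((2:ℂ)^n • y) 0 / 2^n)
    (hcube : ∀ (z : A) (n : ℕ),
      ‖(h ((2:ℂ)^(3*n) • jcube A hAc z) : 𝓑)
        - (h ((2:ℂ)^n • z) : 𝓑) * star (h ((2:ℂ)^n • z) : 𝓑) * (h ((2:ℂ)^n • z) : 𝓑)‖
        ≤ φ 0 0 ((2:ℂ)^n • z))
    (hlim : ∀ z : A, Tendsto (fun n : ℕ => φ 0 0 ((2:ℂ)^n • z) / 2^n) atTop (nhds 0))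
    (T : A → B)
    (hT : ∀ x : A,
      Tendsto (fun n : ℕ => (((2:ℂ)^n)⁻¹ • h ((2:ℂ)^n • x) : B)) atTop (nhds (T x))) :
    ∀ z : A, (T (jcube A hAc z) : 𝓑) = (T z : 𝓑) * star (T z : 𝓑) * (T z : 𝓑) := by
  intro z
  -- coerced limits in 𝓑
  have hTz : Tendsto (fun n : ℕ => (((2:ℂ)^n)⁻¹ • (h ((2:ℂ)^n • z) : 𝓑)))
      atTop (nhds (T z : 𝓑)) := by
    have := (continuous_subtype_val.tendsto _).comp (hT z)
    simpa [Function.comp_def] using this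
  have hTc : Tendsto (fun n : ℕ => (((2:ℂ)^(3*n))⁻¹ • (h ((2:ℂ)^(3*n) • jcube A hAc z) : 𝓑)))
      atTop (nhds (T (jcube A hAc z) : 𝓑)) := by
    have h1 := (continuous_subtype_val.tendsto _).comp (hT (jcube A hAc z))
    have h2 : Tendsto (fun n : ℕ => 3 * n) atTop atTop :=
      tendsto_atTop_atTop_of_monotone (fun a b hab => by omega) (fun b => ⟨b, by omega⟩)
    simpa [Function.comp_def] using h1.comp h2
  -- cube of limit
  have hcubeT : Tendsto (fun n : ℕ =>
      (((2:ℂ)^n)⁻¹ • (h ((2:ℂ)^n • z) : 𝓑)) * star (((2:ℂ)^n)⁻¹ • (h ((2:ℂ)^n • z) : 𝓑))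
        * (((2:ℂ)^n)⁻¹ • (h ((2:ℂ)^n • z) : 𝓑)))
      atTop (nhds ((T z : 𝓑) * star (T z : 𝓑) * (T z : 𝓑))) :=
    ((hTz.mul (hTz.star)).mul hTz)
  -- rewrite the cube of the scaled term
  have key : ∀ n : ℕ,
      (((2:ℂ)^n)⁻¹ • (h ((2:ℂ)^n • z) : 𝓑)) * star (((2:ℂ)^n)⁻¹ • (h ((2:ℂ)^n • z) : 𝓑))
        * (((2:ℂ)^n)⁻¹ • (h ((2:ℂ)^n • z) : 𝓑))
      = ((2:ℂ)^(3*n))⁻¹ • ((h ((2:ℂ)^n • z) : 𝓑) * star (h ((2:ℂ)^n • z) : 𝓑)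
          * (h ((2:ℂ)^n • z) : 𝓑)) := by
    intro n
    have hconj : star (((2:ℂ)^n)⁻¹) = ((2:ℂ)^n)⁻¹ := by
      simp
    rw [star_smul, hconj, smul_mul_smul_comm, smul_mul_smul_comm]
    congr 1
    rw [show 3*n = n+n+n by omega, pow_add, pow_add, mul_inv, mul_inv]
  -- the difference tends to 0
  have hdiff : Tendsto (fun n : ℕ =>
      (((2:ℂ)^(3*n))⁻¹ • (h ((2:ℂ)^(3*n) • jcube A hAc z) : 𝓑))
        - (((2:ℂ)^n)⁻¹ • (h ((2:ℂ)^n • z) : 𝓑)) * star (((2:ℂ)^n)⁻¹ • (h ((2:ℂ)^n • z) : 𝓑))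
          * (((2:ℂ)^n)⁻¹ • (h ((2:ℂ)^n • z) : 𝓑)))
      atTop (nhds 0) := by
    have hle : ∀ n : ℕ,
        ‖(((2:ℂ)^(3*n))⁻¹ • (h ((2:ℂ)^(3*n) • jcube A hAc z) : 𝓑))
          - (((2:ℂ)^n)⁻¹ • (h ((2:ℂ)^n • z) : 𝓑)) * star (((2:ℂ)^n)⁻¹ • (h ((2:ℂ)^n • z) : 𝓑))
            * (((2:ℂ)^n)⁻¹ • (h ((2:ℂ)^n • z) : 𝓑))‖
        ≤ φ 0 0 ((2:ℂ)^n • z) / 2^n := by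
      intro n
      rw [key n, ← smul_sub, norm_smul]
      have hnorm : ‖((2:ℂ)^(3*n))⁻¹‖ = ((2:ℝ)^(3*n))⁻¹ := by
        simp
      rw [hnorm]
      calc ((2:ℝ)^(3*n))⁻¹ * ‖(h ((2:ℂ)^(3*n) • jcube A hAc z) : 𝓑)
            - (h ((2:ℂ)^n • z) : 𝓑) * star (h ((2:ℂ)^n • z) : 𝓑) * (h ((2:ℂ)^n • z) : 𝓑)‖
          ≤ ((2:ℝ)^n)⁻¹ * φ 0 0 ((2:ℂ)^n • z) := by
            apply mul_le_mul
            · apply inv_anti₀ (by positivity)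
              exact pow_le_pow_right₀ (by norm_num) (by omega)
            · exact hcube z n
            · exact norm_nonneg _
            · positivity
        _ = φ 0 0 ((2:ℂ)^n • z) / 2^n := by ring
    exact squeeze_zero_norm hle (hlim z)
  have := hTc.sub hcubeT
  have h0 : (T (jcube A hAc z) : 𝓑) - (T z : 𝓑) * star (T z : 𝓑) * (T z : 𝓑) = 0 :=
    tendsto_nhds_unique this hdiff
  exact sub_eq_zero.mp h0
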